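/- Let α, β, γ, δ, σ > 0 and let (x, y) : [0,∞) → ℝ² be a differentiable solution of ẋ = δ − αx − βxy, ẏ = γxy − σy. If 0 ≤ x(0) ≤ δ/α and y(0) ≥ 0, then 0 ≤ x(t) ≤ δ/α and y(t) ≥ 0 for all t ≥ 0; that is, the half-strip H = {(x,y) : 0 ≤ x ≤ δ/α, y ≥ 0} is forward flow-invariant. -/

import Mathlib

open Real Set intervalIntegral

/-- FTC for a continuous integrand. -/
lemma ftc_cont' {g : ℝ → ℝ} (hg : Continuous g) (t : ℝ) :
    HasDerivAt (fun u => ∫ s in (0:ℝ)..u, g s) (g t) t :=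
  integral_hasDerivAt_right (hg.intervalIntegrable 0 t)
    (hg.stronglyMeasurableAtFilter _ _) hg.continuousAt

/-- If `f` is continuous on `Ici 0` and has nonnegative derivative at each point
of `Ioi 0`, then `f 0 ≤ f t` for `t ≥ 0`. -/
lemma mono_aux' {f f' : ℝ → ℝ} (hc : ContinuousOn f (Ici 0))
    (hf : ∀ s, 0 < s → HasDerivAt f (f' s) s)
    (hf' : ∀ s, 0 < s → 0 ≤ f' s) {t : ℝ} (ht : 0 ≤ t) : f 0 ≤ f t := by
  have := monotoneOn_of_hasDerivWithinAt_nonneg (f' := f') (convex_Ici (0:ℝ)) hc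
    (fun s hs => by
      rw [interior_Ici] at hs ⊢
      exact (hf s hs).hasDerivWithinAt)
    (fun s hs => hf' s (by rwa [interior_Ici] at hs))
  exact this (mem_Ici.2 le_rfl) ht ht

theorem damped_pp_halfstrip_invariant
    (α β γ δ σ : ℝ)
    (hα : 0 < α) (hβ : 0 < β) (hγ : 0 < γ) (hδ : 0 < δ) (hσ : 0 < σ)
    (x y : ℝ → ℝ)
    (hx : ∀ t, 0 ≤ t → HasDerivAt x (δ - α * x t - β * x t * y t) t)
    (hy : ∀ t, 0 ≤ t → HasDerivAt y (γ * x t * y t - σ * y t) t)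
    (hx0 : 0 ≤ x 0) (hx0' : x 0 ≤ δ / α) (hy0 : 0 ≤ y 0) :
    ∀ t, 0 ≤ t → (0 ≤ x t ∧ x t ≤ δ / α ∧ 0 ≤ y t) := by
  have hxc : ∀ t, 0 ≤ t → ContinuousAt x t := fun t ht => (hx t ht).continuousAt
  have hyc : ∀ t, 0 ≤ t → ContinuousAt y t := fun t ht => (hy t ht).continuousAt
  have hmax : Continuous (fun t : ℝ => max t 0) := continuous_id.max continuous_const
  have hxt : Continuous (fun t : ℝ => x (max t 0)) := by
    have : (fun t : ℝ => x (max t 0)) = x ∘ (fun t => max t 0) := rfl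
    rw [this]
    exact continuous_iff_continuousAt.2 fun t =>
      ContinuousAt.comp (hxc _ (le_max_right t 0)) hmax.continuousAt
  have hyt : Continuous (fun t : ℝ => y (max t 0)) := by
    have : (fun t : ℝ => y (max t 0)) = y ∘ (fun t => max t 0) := rfl
    rw [this]
    exact continuous_iff_continuousAt.2 fun t =>
      ContinuousAt.comp (hyc _ (le_max_right t 0)) hmax.continuousAt
  -- Step 1 : y ≥ 0
  have hyge : ∀ t, 0 ≤ t → 0 ≤ y t := by
    set g : ℝ → ℝ := fun t => γ * x (max t 0) - σ with hgdef
    have hg : Continuous g := (continuous_const.mul hxt).sub continuous_const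
    set F : ℝ → ℝ := fun u => ∫ s in (0:ℝ)..u, g s with hFdef
    have hF : ∀ t, HasDerivAt F (g t) t := ftc_cont' hg
    have hFc : Continuous F := continuous_iff_continuousAt.2 fun t => ((hF t).differentiableAt).continuousAt
    intro t ht
    set z : ℝ → ℝ := fun u => y u * Real.exp (-F u) with hzdef
    have hz : ∀ s, 0 ≤ s → HasDerivAt z 0 s := by
      intro s hs
      have h1 : HasDerivAt (fun u => Real.exp (-F u)) (Real.exp (-F s) * -(g s)) s :=
        ((hF s).neg).exp
      have h2 : HasDerivAt z ((γ * x s * y s - σ * y s) * Real.exp (-F s) + y s * (Real.exp (-F s) * -(g s))) s :=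
        (hy s hs).mul h1
      convert h2 using 1
      have hgs : g s = γ * x s - σ := by simp [hgdef, max_eq_left hs]
      rw [hgs]; ring
    have hEc : Continuous (fun u => Real.exp (-F u)) := Real.continuous_exp.comp hFc.neg
    have hzc : ContinuousOn z (Icc 0 t) := fun s hs =>
      ((hyc s hs.1).mul hEc.continuousAt).continuousWithinAt
    have hconst := constant_of_has_deriv_right_zero hzc
      (fun s hs => (hz s hs.1).hasDerivWithinAt) t (by exact ⟨ht, le_refl t⟩)
    have hz0 : z 0 = y 0 * Real.exp (-F 0) := rfl
    have : y t * Real.exp (-F t) = y 0 * Real.exp (-F 0) := hconst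
    nlinarith [Real.exp_pos (-F t), Real.exp_pos (-F 0), mul_nonneg hy0 (Real.exp_pos (-F 0)).le]
  -- Step 2 : x ≥ 0
  have hxge : ∀ t, 0 ≤ t → 0 ≤ x t := by
    set h : ℝ → ℝ := fun t => α + β * y (max t 0) with hhdef
    have hh : Continuous h := continuous_const.add (continuous_const.mul hyt)
    set G : ℝ → ℝ := fun u => ∫ s in (0:ℝ)..u, h s with hGdef
    have hG : ∀ t, HasDerivAt G (h t) t := ftc_cont' hh
    have hGc : Continuous G := continuous_iff_continuousAt.2 fun t => ((hG t).differentiableAt).continuousAt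
    intro t ht
    set u : ℝ → ℝ := fun s => x s * Real.exp (G s) with hudef
    have hu : ∀ s, 0 ≤ s → HasDerivAt u (δ * Real.exp (G s)) s := by
      intro s hs
      have h1 : HasDerivAt (fun v => Real.exp (G v)) (Real.exp (G s) * h s) s := (hG s).exp
      have h2 : HasDerivAt u ((δ - α * x s - β * x s * y s) * Real.exp (G s) + x s * (Real.exp (G s) * h s)) s :=
        (hx s hs).mul h1
      convert h2 using 1
      have hhs : h s = α + β * y s := by simp [hhdef, max_eq_left hs]
      rw [hhs]; ring
    have hEc : Continuous (fun s => Real.exp (G s)) := Real.continuous_exp.comp hGc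
    have hmono : u 0 ≤ u t := by
      refine mono_aux' (f' := fun s => δ * Real.exp (G s))
        (fun s hs => ((hxc s hs).mul hEc.continuousAt).continuousWithinAt)
        (fun s hs => hu s hs.le)
        (fun s hs => mul_nonneg hδ.le (Real.exp_pos _).le) ht
    have hu0 : u 0 = x 0 * Real.exp (G 0) := rfl
    have hpos := Real.exp_pos (G t)
    have h0 : 0 ≤ u 0 := mul_nonneg hx0 (Real.exp_pos _).le
    have : 0 ≤ x t * Real.exp (G t) := le_trans h0 hmono
    nlinarith
  -- Step 3 : x ≤ δ/α
  intro t ht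
  refine ⟨hxge t ht, ?_, hyge t ht⟩
  set w : ℝ → ℝ := fun s => (δ / α - x s) * Real.exp (α * s) with hwdef
  have hw : ∀ s, 0 ≤ s → HasDerivAt w (β * x s * y s * Real.exp (α * s)) s := by
    intro s hs
    have h1 : HasDerivAt (fun v : ℝ => Real.exp (α * v)) (Real.exp (α * s) * α) s := by
      have : HasDerivAt (fun v : ℝ => α * v) α s := by
        simpa using (hasDerivAt_id s).const_mul α
      exact this.exp
    have h2 : HasDerivAt (fun v => δ / α - x v) (-(δ - α * x s - β * x s * y s)) s :=
      ((hx s hs).const_sub (δ / α))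
    have h3 : HasDerivAt w (-(δ - α * x s - β * x s * y s) * Real.exp (α * s) + (δ / α - x s) * (Real.exp (α * s) * α)) s :=
      h2.mul h1
    convert h3 using 1
    field_simp
    ring
  have hEc : Continuous (fun s : ℝ => Real.exp (α * s)) :=
    Real.continuous_exp.comp (continuous_const.mul continuous_id)
  have hmono : w 0 ≤ w t := by
    refine mono_aux' (f' := fun s => β * x s * y s * Real.exp (α * s))
      (fun s hs => ((continuousAt_const.sub (hxc s hs)).mul hEc.continuousAt).continuousWithinAt)
      (fun s hs => hw s hs.le)
      (fun s hs => mul_nonneg (mul_nonneg (mul_nonneg hβ.le (hxge s hs.le)) (hyge s hs.le))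
        (Real.exp_pos _).le) ht
  have h0 : 0 ≤ w 0 := by
    have he : w 0 = (δ / α - x 0) * Real.exp (α * 0) := rfl
    rw [he, mul_zero, Real.exp_zero, mul_one]
    linarith
  have hle := le_trans h0 hmono
  have hwt : w t = (δ / α - x t) * Real.exp (α * t) := rfl
  rw [hwt] at hle
  have hpos := Real.exp_pos (α * t)
  nlinarith
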